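/- Let τ = (1+√5)/2 and let G be the subgroup of ℍˣ generated by all products p·q, where p and q range over the 30 pure unit quaternions ±i, ±j, ±k and all cyclic permutations of ½(±1·i ± τ·j ± τ⁻¹·k) (so G is the binary icosahedral group 2I with 120 elements). Regard the real quaternions ℍ as a four-dimensional real inner product space with inner product ⟨x,y⟩ = Re(x·conj(y)). Then the underlying set of G is closed under the reflection s_α for every α ∈ G: for all α, v ∈ G, v − 2⟨v,α⟩α ∈ G. Hence the 120 rotors generated by the reflections of the icosahedral group H₃, viewed as vectors in 4-dimensional Euclidean space, form a root system (the root system H₄, the vertices of the 600-cell). -/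

import Mathlib

noncomputable section

/-- The golden ratio `τ = (1+√5)/2`. -/
def τ : ℝ := (1 + Real.sqrt 5) / 2

/-- The quaternion unit `i`. -/
def qi : Quaternion ℝ := ⟨0, 1, 0, 0⟩
/-- The quaternion unit `j`. -/
def qj : Quaternion ℝ := ⟨0, 0, 1, 0⟩
/-- The quaternion unit `k`. -/
def qk : Quaternion ℝ := ⟨0, 0, 0, 1⟩

/-- The sign set `{1, -1}`. -/
def pm : Set ℝ := {1, -1}

/-- The 30 unit roots of `H₃`: `±i, ±j, ±k` together with all cyclic
permutations of the pure quaternions `½(±1·i ± τ·j ± τ⁻¹·k)`. -/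
def rootsH3 : Set (Quaternion ℝ) :=
  {x | (∃ ε ∈ pm, x = ε • qi ∨ x = ε • qj ∨ x = ε • qk) ∨
    (∃ ε₁ ∈ pm, ∃ ε₂ ∈ pm, ∃ ε₃ ∈ pm,
      (x = (2 : ℝ)⁻¹ • (ε₁ • qi + (ε₂ * τ) • qj + (ε₃ * τ⁻¹) • qk) ∨
       x = (2 : ℝ)⁻¹ • ((ε₃ * τ⁻¹) • qi + ε₁ • qj + (ε₂ * τ) • qk) ∨
       x = (2 : ℝ)⁻¹ • ((ε₂ * τ) • qi + (ε₃ * τ⁻¹) • qj + ε₁ • qk)))}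

/-- The set of units of ℍ of the form `p·q` with `p, q` unit roots of `H₃`. -/
def rotorGenH3 : Set (Quaternion ℝ)ˣ :=
  {u | ∃ p ∈ rootsH3, ∃ q ∈ rootsH3, (u : Quaternion ℝ) = p * q}

/-- The underlying set of quaternions of the binary icosahedral group `2I`:
the subgroup of `ℍˣ` generated by all products of pairs of unit roots of
`H₃`, regarded as a set of quaternions. -/
def binaryIcosa : Set (Quaternion ℝ) :=
  (fun u : (Quaternion ℝ)ˣ => (u : Quaternion ℝ)) ''
    ((Subgroup.closure rotorGenH3 : Subgroup (Quaternion ℝ)ˣ) : Set (Quaternion ℝ)ˣ)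

/-- The real inner product `⟨x, y⟩ = Re(x · conj y)` on ℍ ≅ ℝ⁴. -/
def qInner (x y : Quaternion ℝ) : ℝ := (x * star y).re


lemma tau_sq : τ ^ 2 = τ + 1 := by
  have h5 : Real.sqrt 5 ^ 2 = 5 := Real.sq_sqrt (by norm_num)
  unfold τ; nlinarith [h5]

lemma tau_ne : τ ≠ 0 := by
  have : (0:ℝ) ≤ Real.sqrt 5 := Real.sqrt_nonneg 5
  unfold τ; nlinarith

lemma pm_cases {ε : ℝ} (hε : ε ∈ pm) : ε = 1 ∨ ε = -1 := by
  simpa [pm, Set.mem_insert_iff, Set.mem_singleton_iff] using hε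

lemma sq_pm {ε : ℝ} (hε : ε ∈ pm) : ε ^ 2 = 1 := by
  rcases pm_cases hε with h | h <;> simp [h]

lemma key4 : (1:ℝ) + τ^2 + (τ⁻¹)^2 = 4 := by
  have h := tau_sq
  have h0 := tau_ne
  field_simp
  nlinarith [h]

lemma half_norm {a b c : ℝ} (ha : a ^ 2 = 1) (hb : b ^ 2 = 1) (hc : c ^ 2 = 1) :
    (1/2*a)^2 + (1/2*(b*τ))^2 + (1/2*(c*τ⁻¹))^2 = 1 := by
  linear_combination (1/4)*ha + (τ^2/4)*hb + ((τ⁻¹)^2/4)*hc + (1/4)*key4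

lemma normSq_rootsH3 {x : Quaternion ℝ} (hx : x ∈ rootsH3) :
    Quaternion.normSq x = 1 := by
  rcases hx with ⟨ε, hε, h | h | h⟩ | ⟨ε₁, h1, ε₂, h2, ε₃, h3, h | h | h⟩ <;>
      subst h <;>
      simp only [Quaternion.normSq_def', Quaternion.re_smul, Quaternion.imI_smul,
        Quaternion.imJ_smul, Quaternion.imK_smul, Quaternion.re_add, Quaternion.imI_add,
        Quaternion.imJ_add, Quaternion.imK_add, smul_eq_mul] <;>
      simp only [qi, qj, qk]
  case' inl.inl => rcases pm_cases hε with h | h <;> norm_num [h]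
  case' inl.inr.inl => rcases pm_cases hε with h | h <;> norm_num [h]
  case' inl.inr.inr => rcases pm_cases hε with h | h <;> norm_num [h]
  all_goals linarith [half_norm (sq_pm h1) (sq_pm h2) (sq_pm h3)]

lemma reflect_eq (α v : Quaternion ℝ) (hα : star α * α = 1) :
    v - (2 * qInner v α) • α = -(α * star v * α) := by
  have h2 : ((2 * qInner v α : ℝ) : Quaternion ℝ) = v * star α + α * star v := by
    rw [qInner, ← Quaternion.self_add_star', star_mul, star_star]
  calc v - (2 * qInner v α) • α
      = v - ((2 * qInner v α : ℝ) : Quaternion ℝ) * α := by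
        rw [Quaternion.coe_mul_eq_smul]
    _ = v - (v * (star α * α) + α * star v * α) := by rw [h2, add_mul, mul_assoc]
    _ = -(α * star v * α) := by rw [hα, mul_one]; abel

lemma qi_mem : qi ∈ rootsH3 := by
  left
  exact ⟨1, Or.inl rfl, Or.inl (by rw [one_smul])⟩

lemma neg_one_mem : (-1 : (Quaternion ℝ)ˣ) ∈ Subgroup.closure rotorGenH3 := by
  apply Subgroup.subset_closure
  refine ⟨qi, qi_mem, qi, qi_mem, ?_⟩
  simp only [Units.val_neg, Units.val_one]
  ext <;> simp [Quaternion.re_mul, Quaternion.imI_mul, Quaternion.imJ_mul,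
    Quaternion.imK_mul, Quaternion.re_one, Quaternion.imI_one, Quaternion.imJ_one,
    Quaternion.imK_one] <;> simp [qi]

lemma normSq_mem {u : (Quaternion ℝ)ˣ} (hu : u ∈ Subgroup.closure rotorGenH3) :
    Quaternion.normSq (u : Quaternion ℝ) = 1 := by
  induction hu using Subgroup.closure_induction with
  | mem u hu =>
      obtain ⟨p, hp, q, hq, h⟩ := hu
      rw [h, map_mul, normSq_rootsH3 hp, normSq_rootsH3 hq, one_mul]
  | one => simp
  | mul a b _ _ ha hb => rw [Units.val_mul, map_mul, ha, hb, one_mul]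
  | inv a _ ha =>
      rw [Units.val_inv_eq_inv_val, map_inv₀, ha, inv_one]

/-- Regarding ℍ as a four-dimensional real inner product space with
`⟨x,y⟩ = Re(x · conj y)`, the underlying set of the binary icosahedral group
`2I` (the 120 rotors generated by the reflections of the icosahedral group
`H₃`) is closed under the reflection `s_α` for every `α` in the set: for all
`α, v ∈ 2I`, the vector `v − 2⟨v,α⟩α` is again in `2I`. Hence these 120
rotors, viewed as vectors in 4-dimensional Euclidean space, form a root
system (the root system `H₄`, the vertices of the 600-cell). -/
theorem binaryIcosa_closed_under_reflections :
    ∀ α ∈ binaryIcosa, ∀ v ∈ binaryIcosa,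
      v - (2 * qInner v α) • α ∈ binaryIcosa := by
  rintro α ⟨a, ha, rfl⟩ v ⟨b, hb, rfl⟩
  have hna : star (a : Quaternion ℝ) * a = 1 := by
    rw [Quaternion.star_mul_self, normSq_mem ha, Quaternion.coe_one]
  have hb1 : (b : Quaternion ℝ) * star (b : Quaternion ℝ) = 1 := by
    rw [Quaternion.self_mul_star, normSq_mem hb, Quaternion.coe_one]
  have hsb : star (b : Quaternion ℝ) = ((b⁻¹ : (Quaternion ℝ)ˣ) : Quaternion ℝ) := by
    rw [Units.val_inv_eq_inv_val]
    exact eq_inv_of_mul_eq_one_right hb1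
  refine ⟨(-1) * a * b⁻¹ * a, ?_, ?_⟩
  · exact mul_mem (mul_mem (mul_mem neg_one_mem ha) (inv_mem hb)) ha
  · show ((((-1) * a * b⁻¹ * a : (Quaternion ℝ)ˣ)) : Quaternion ℝ)
        = (b : Quaternion ℝ) - (2 * qInner b a) • (a : Quaternion ℝ)
    rw [reflect_eq _ _ hna, hsb]
    simp [Units.val_mul, mul_assoc]
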